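/- Let 1 < q < p < 2 and λ ∈ (λ_min, λ_max) with λ_min = (q(q−1))/(p(p−1))·2^{p−q} and λ_max = q/p. Then the minimum of f_λ(x) = x^q + (1−x)^q − λ(x^p + (1−x)^p) on [0,1/2] is attained at a unique point strictly between 0 and 1/2. -/

import Mathlib

open Real Set Topology Filter

lemma aux_sinh (B : ℝ) (hB : 0 < B) : Real.sinh B < B * Real.cosh B := by
  have h : StrictMonoOn (fun t : ℝ => t * Real.cosh t - Real.sinh t) (Ici 0) := by
    apply strictMonoOn_of_deriv_pos (convex_Ici 0)
    · fun_prop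
    · intro t ht
      rw [interior_Ici] at ht
      have hd : HasDerivAt (fun t : ℝ => t * Real.cosh t - Real.sinh t) (t * Real.sinh t) t := by
        have := ((hasDerivAt_id t).mul (Real.hasDerivAt_cosh t)).sub (Real.hasDerivAt_sinh t)
        exact this.congr_deriv (by simp only [id_eq]; ring)
      rw [hd.deriv]
      exact mul_pos ht (Real.sinh_pos_iff.2 ht)
  have := h (self_mem_Ici) (le_of_lt hB : (0:ℝ) ≤ B) hB
  simp at this
  linarith
lemma aux_cosh_sinh (A B : ℝ) (hA : 0 < A) (hB : 0 < B) :
    Real.cosh A * Real.sinh B < B * Real.cosh (A + B) := by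
  rw [Real.cosh_add]
  have h1 : Real.cosh A * Real.sinh B < Real.cosh A * (B * Real.cosh B) :=
    mul_lt_mul_of_pos_left (aux_sinh B hB) (Real.cosh_pos A)
  have h2 : 0 < B * (Real.sinh A * Real.sinh B) :=
    mul_pos hB (mul_pos (Real.sinh_pos_iff.2 hA) (Real.sinh_pos_iff.2 hB))
  nlinarith [h1, h2]

lemma K_anti (δ : ℝ) (hδ : 0 < δ) :
    StrictAntiOn (fun s : ℝ => s * Real.cosh ((1 - s) * δ) / Real.sinh (s * δ)) (Ioo 0 1) := by
  apply strictAntiOn_of_deriv_neg (convex_Ioo 0 1)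
  · apply ContinuousOn.div
    · fun_prop
    · fun_prop
    · intro s hs
      exact ne_of_gt (Real.sinh_pos_iff.2 (mul_pos hs.1 hδ))
  · intro s hs
    rw [interior_Ioo] at hs
    obtain ⟨hs0, hs1⟩ := hs
    have hsd : 0 < s * δ := mul_pos hs0 hδ
    have hsd1 : 0 < (1 - s) * δ := mul_pos (by linarith) hδ
    have hsinh : 0 < Real.sinh (s * δ) := Real.sinh_pos_iff.2 hsd
    -- derivative of numerator
    have hinner : HasDerivAt (fun s : ℝ => (1 - s) * δ) (-δ) s := by
      have := ((hasDerivAt_id s).const_sub 1).mul_const δ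
      exact this.congr_deriv (by ring)
    have hN : HasDerivAt (fun s : ℝ => s * Real.cosh ((1 - s) * δ))
        (Real.cosh ((1 - s) * δ) + s * (Real.sinh ((1 - s) * δ) * -δ)) s := by
      have hc : HasDerivAt (fun s : ℝ => Real.cosh ((1 - s) * δ))
          (Real.sinh ((1 - s) * δ) * -δ) s := by
        have := (Real.hasDerivAt_cosh ((1 - s) * δ)).comp s hinner
        exact this
      have := (hasDerivAt_id s).mul hc
      exact this.congr_deriv (by simp only [id_eq]; ring)
    have hinner2 : HasDerivAt (fun s : ℝ => s * δ) δ s := by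
      simpa using (hasDerivAt_id s).mul_const δ
    have hD : HasDerivAt (fun s : ℝ => Real.sinh (s * δ)) (Real.cosh (s * δ) * δ) s := by
      have := (Real.hasDerivAt_sinh (s * δ)).comp s hinner2
      exact this
    have hK := hN.div hD (ne_of_gt hsinh)
    rw [Pi.div_def] at hK
    rw [hK.deriv]
    apply div_neg_of_neg_of_pos
    · have key : Real.cosh ((1 - s) * δ) * Real.sinh (s * δ) < (s * δ) * Real.cosh δ := by
        have := aux_cosh_sinh ((1 - s) * δ) (s * δ) hsd1 hsd
        have he : (1 - s) * δ + s * δ = δ := by ring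
        rwa [he] at this
      have hch : Real.cosh ((1-s)*δ) * Real.cosh (s*δ) + Real.sinh ((1-s)*δ) * Real.sinh (s*δ)
          = Real.cosh δ := by
        rw [← Real.cosh_add]; ring_nf
      nlinarith [key, hch]
    · positivity

lemma crux2 (a b δ : ℝ) (ha : 0 < a) (hab : a < b) (hb : b < 1) (hδ : 0 < δ) :
    b * Real.cosh ((1 - b) * δ) * Real.sinh (a * δ) <
      a * Real.cosh ((1 - a) * δ) * Real.sinh (b * δ) := by
  have hK := K_anti δ hδ ⟨ha, hab.trans hb⟩ ⟨ha.trans hab, hb⟩ hab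
  have hsa : 0 < Real.sinh (a * δ) := Real.sinh_pos_iff.2 (mul_pos ha hδ)
  have hsb : 0 < Real.sinh (b * δ) := Real.sinh_pos_iff.2 (mul_pos (ha.trans hab) hδ)
  rw [div_lt_div_iff₀ hsb hsa] at hK
  linarith [hK]

lemma crux (a b x y : ℝ) (ha : 0 < a) (hab : a < b) (hb : b < 1) (hx : 0 < x) (hxy : x < y) :
    b * ((y ^ (b-1) + x ^ (b-1)) * (y ^ a - x ^ a)) <
      a * ((y ^ (a-1) + x ^ (a-1)) * (y ^ b - x ^ b)) := by
  have hy : 0 < y := hx.trans hxy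
  set m : ℝ := (Real.log x + Real.log y) / 2 with hm
  set δ : ℝ := (Real.log y - Real.log x) / 2 with hd
  have hδ : 0 < δ := by
    have := Real.log_lt_log hx hxy
    simp only [hd]; linarith
  have hxe : ∀ c : ℝ, x ^ c = Real.exp (c * m - c * δ) := by
    intro c
    rw [Real.rpow_def_of_pos hx]
    congr 1
    simp only [hm, hd]; ring
  have hye : ∀ c : ℝ, y ^ c = Real.exp (c * m + c * δ) := by
    intro c
    rw [Real.rpow_def_of_pos hy]
    congr 1
    simp only [hm, hd]; ring
  have key := crux2 a b δ ha hab hb hδ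
  have hfac : (0:ℝ) < 4 * Real.exp ((a + b - 1) * m) := by positivity
  have key2 := mul_lt_mul_of_pos_left key hfac
  calc b * ((y ^ (b-1) + x ^ (b-1)) * (y ^ a - x ^ a))
      = 4 * Real.exp ((a + b - 1) * m) * (b * Real.cosh ((1 - b) * δ) * Real.sinh (a * δ)) := by
        rw [hxe, hxe, hye, hye, Real.cosh_eq, Real.sinh_eq]
        rw [show -((1-b)*δ) = (b-1)*δ by ring, show -(a*δ) = -a*δ by ring]
        ring_nf
        simp only [mul_assoc, ← Real.exp_add]
        ring_nf
    _ < 4 * Real.exp ((a + b - 1) * m) * (a * Real.cosh ((1 - a) * δ) * Real.sinh (b * δ)) := key2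
    _ = a * ((y ^ (a-1) + x ^ (a-1)) * (y ^ b - x ^ b)) := by
        rw [hxe, hxe, hye, hye, Real.cosh_eq, Real.sinh_eq]
        rw [show -((1-a)*δ) = (a-1)*δ by ring, show -(b*δ) = -b*δ by ring]
        ring_nf
        simp only [mul_assoc, ← Real.exp_add]
        ring_nf

lemma ratio_anti (a b : ℝ) (ha : 0 < a) (hab : a < b) (hb : b < 1) :
    StrictAntiOn (fun x : ℝ => ((1-x) ^ a - x ^ a) / ((1-x) ^ b - x ^ b)) (Ioo (0:ℝ) (1/2)) := by
  have hvpos : ∀ x ∈ Ioo (0:ℝ) (1/2), ∀ c : ℝ, 0 < c → (0:ℝ) < (1-x) ^ c - x ^ c := by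
    intro x hx c hc
    have h1 : x < 1 - x := by rcases hx with ⟨h1, h2⟩; linarith [h2]
    have := Real.rpow_lt_rpow (le_of_lt hx.1) h1 hc
    linarith
  -- derivative facts
  have hderiv : ∀ x ∈ Ioo (0:ℝ) (1/2), ∀ c : ℝ, 0 < c →
      HasDerivAt (fun x : ℝ => (1-x) ^ c - x ^ c)
        (-(c * (1-x) ^ (c-1)) - c * x ^ (c-1)) x := by
    intro x hx c hc
    have hx0 : x ≠ 0 := ne_of_gt hx.1
    have h1x : (1:ℝ) - x ≠ 0 := by
      have h2 : x < 1/2 := hx.2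
      intro h; rw [sub_eq_zero] at h; simp only [← h] at h2; linarith
    have hinner : HasDerivAt (fun x : ℝ => 1 - x) (-1) x := (hasDerivAt_id x).const_sub 1
    have h1 : HasDerivAt (fun x : ℝ => (1-x) ^ c) (c * (1-x) ^ (c-1) * (-1)) x :=
      (Real.hasDerivAt_rpow_const (Or.inl h1x)).comp x hinner
    have h2 : HasDerivAt (fun x : ℝ => x ^ c) (c * x ^ (c-1)) x :=
      Real.hasDerivAt_rpow_const (Or.inl hx0)
    have := h1.sub h2
    exact this.congr_deriv (by ring)
  apply strictAntiOn_of_deriv_neg (convex_Ioo 0 (1/2))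
  · apply ContinuousOn.div
    · intro x hx; exact ((hderiv x hx a ha).continuousAt).continuousWithinAt
    · intro x hx; exact ((hderiv x hx b (ha.trans hab)).continuousAt).continuousWithinAt
    · intro x hx; exact ne_of_gt (hvpos x hx b (ha.trans hab))
  · rw [interior_Ioo]
    intro x hx
    have hu := hderiv x hx a ha
    have hv := hderiv x hx b (ha.trans hab)
    have hvne := ne_of_gt (hvpos x hx b (ha.trans hab))
    have hK := hu.div hv hvne
    rw [Pi.div_def] at hK
    rw [hK.deriv]
    apply div_neg_of_neg_of_pos
    · have hkey := crux a b x (1-x) ha hab hb hx.1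
        (by rcases hx with ⟨h1, h2⟩; linarith [h2])
      nlinarith [hkey]
    · have := hvpos x hx b (ha.trans hab)
      positivity

lemma uv_hasDerivAt (c x : ℝ) (hx0 : x ≠ 0) (hx1 : (1:ℝ) - x ≠ 0) :
    HasDerivAt (fun x : ℝ => (1-x) ^ c - x ^ c)
      (-(c * (1-x) ^ (c-1)) - c * x ^ (c-1)) x := by
  have hinner : HasDerivAt (fun x : ℝ => 1 - x) (-1) x := (hasDerivAt_id x).const_sub 1
  have h1 : HasDerivAt (fun x : ℝ => (1-x) ^ c) (c * (1-x) ^ (c-1) * (-1)) x :=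
    (Real.hasDerivAt_rpow_const (Or.inl hx1)).comp x hinner
  have h2 : HasDerivAt (fun x : ℝ => x ^ c) (c * x ^ (c-1)) x :=
    Real.hasDerivAt_rpow_const (Or.inl hx0)
  have := h1.sub h2
  exact this.congr_deriv (by ring)

theorem min_f_smooth_transition_interior
    (p q lam : ℝ) (hq : 1 < q) (hqp : q < p) (hp : p < 2)
    (f : ℝ → ℝ)
    (hf : ∀ x, f x = x ^ q + (1 - x) ^ q - lam * (x ^ p + (1 - x) ^ p))
    (hlam1 : (q * (q - 1)) / (p * (p - 1)) * 2 ^ (p - q) < lam)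
    (hlam2 : lam < q / p) :
    ∃ x₀ ∈ Ioo (0 : ℝ) (1/2),
      ∀ x ∈ Icc (0 : ℝ) (1/2), x ≠ x₀ → f x₀ < f x := by
  have hq0 : (0:ℝ) < q := by linarith
  have hp0 : (0:ℝ) < p := by linarith
  have hq1 : (0:ℝ) < q - 1 := by linarith
  have hp1 : (0:ℝ) < p - 1 := by linarith
  have hpp1 : (0:ℝ) < p * (p - 1) := by positivity
  have h2pq : (0:ℝ) < (2:ℝ) ^ (p - q) := Real.rpow_pos_of_pos two_pos _
  have hlam0 : 0 < lam := by
    have h1 : (0:ℝ) < q * (q-1) / (p * (p-1)) * 2 ^ (p-q) := by positivity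
    linarith
  -- hlam1 in product form
  have hl1' : q * (q-1) * 2 ^ (p-q) < lam * (p * (p-1)) := by
    rw [div_mul_eq_mul_div, div_lt_iff₀ hpp1] at hlam1
    linarith
  have hl2' : lam * p < q := by
    rw [lt_div_iff₀ hp0] at hlam2; linarith
  -- the function g = -f'
  set g : ℝ → ℝ := fun x =>
    q * ((1-x) ^ (q-1) - x ^ (q-1)) - lam * p * ((1-x) ^ (p-1) - x ^ (p-1)) with hgdef
  have hfe : f = fun x => x ^ q + (1 - x) ^ q - lam * (x ^ p + (1 - x) ^ p) := funext hf
  -- f has derivative -(g x) everywhere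
  have hfd : ∀ x : ℝ, HasDerivAt f (-(g x)) x := by
    intro x
    rw [hfe]
    have h1 : HasDerivAt (fun x : ℝ => x ^ q) (q * x ^ (q-1)) x :=
      Real.hasDerivAt_rpow_const (Or.inr hq.le)
    have hinner : HasDerivAt (fun x : ℝ => 1 - x) (-1) x := (hasDerivAt_id x).const_sub 1
    have h2 : HasDerivAt (fun x : ℝ => (1-x) ^ q) (q * (1-x) ^ (q-1) * (-1)) x :=
      (Real.hasDerivAt_rpow_const (Or.inr hq.le)).comp x hinner
    have h3 : HasDerivAt (fun x : ℝ => x ^ p) (p * x ^ (p-1)) x :=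
      Real.hasDerivAt_rpow_const (Or.inr (by linarith : 1 ≤ p))
    have h4 : HasDerivAt (fun x : ℝ => (1-x) ^ p) (p * (1-x) ^ (p-1) * (-1)) x :=
      (Real.hasDerivAt_rpow_const (Or.inr (by linarith : 1 ≤ p))).comp x hinner
    have := (h1.add h2).sub ((h3.add h4).const_mul lam)
    exact this.congr_deriv (by simp only [hgdef]; ring)
  have hgcont : Continuous g := by
    have hc : ∀ c : ℝ, 0 < c → Continuous fun x : ℝ => (1-x) ^ c - x ^ c := by
      intro c hc
      apply Continuous.sub
      · apply continuous_iff_continuousAt.mpr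
        intro x
        exact (Real.continuousAt_rpow_const _ _ (Or.inr hc.le)).comp
          (continuousAt_id.const_sub 1)
      · apply continuous_iff_continuousAt.mpr
        intro x
        exact Real.continuousAt_rpow_const _ _ (Or.inr hc.le)
    rw [hgdef]
    exact (continuous_const.mul (hc _ hq1)).sub (continuous_const.mul (hc _ hp1))
  -- g 0 > 0
  have hg0 : 0 < g 0 := by
    simp only [hgdef]
    simp only [sub_zero, Real.one_rpow, Real.zero_rpow (ne_of_gt hq1),
      Real.zero_rpow (ne_of_gt hp1), mul_one]
    linarith
  -- g (1/2) = 0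
  have hg12 : g (1/2) = 0 := by
    simp only [hgdef]
    norm_num
  -- g has positive derivative at 1/2
  have hgd : HasDerivAt g
      (2 * (lam * p) * ((p-1) * (1/2 : ℝ) ^ (p-1-1)) - 2 * q * ((q-1) * (1/2 : ℝ) ^ (q-1-1)))
      (1/2) := by
    have h1 := (uv_hasDerivAt (q-1) (1/2) (by norm_num) (by norm_num)).const_mul q
    have h2 := (uv_hasDerivAt (p-1) (1/2) (by norm_num) (by norm_num)).const_mul (lam * p)
    have := h1.sub h2
    rw [hgdef]
    exact this.congr_deriv (by symm; norm_num; ring)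
  have hA : (1/2 : ℝ) ^ (q-1-1) = (1/2 : ℝ) ^ (p-1-1) * 2 ^ (p-q) := by
    rw [show q-1-1 = (p-1-1) + (q-p) by ring, Real.rpow_add (by norm_num : (0:ℝ) < 1/2)]
    congr 1
    rw [one_div, Real.inv_rpow (by norm_num : (0:ℝ) ≤ 2),
      ← Real.rpow_neg (by norm_num : (0:ℝ) ≤ 2), neg_sub]
  have hD : 0 < 2 * (lam * p) * ((p-1) * (1/2 : ℝ) ^ (p-1-1))
      - 2 * q * ((q-1) * (1/2 : ℝ) ^ (q-1-1)) := by
    rw [hA]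
    have hBpos : (0:ℝ) < (1/2 : ℝ) ^ (p-1-1) := Real.rpow_pos_of_pos (by norm_num) _
    have := mul_pos (mul_pos two_pos hBpos)
      (show (0:ℝ) < lam * (p * (p-1)) - q * (q-1) * 2 ^ (p-q) by linarith)
    nlinarith [this]
  -- find x₁ ∈ (0, 1/2) with g x₁ < 0
  obtain ⟨x₁, hx₁mem, hgx₁⟩ : ∃ x₁ ∈ Ioo (0:ℝ) (1/2), g x₁ < 0 := by
    have hslope := hasDerivAt_iff_tendsto_slope.mp hgd
    have hpos := hslope.eventually (eventually_gt_nhds hD)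
    have hsub : 𝓝[<] ((1:ℝ)/2) ≤ 𝓝[≠] ((1:ℝ)/2) :=
      nhdsWithin_mono _ (fun z hz => ne_of_lt hz)
    have hmem : Ioo (0:ℝ) (1/2) ∈ 𝓝[<] ((1:ℝ)/2) :=
      Ioo_mem_nhdsLT (by norm_num : (0:ℝ) < 1/2)
    have hcomb := (hpos.filter_mono hsub).and (eventually_of_mem hmem (fun z hz => hz))
    obtain ⟨z, hz1, hz2⟩ := hcomb.exists
    refine ⟨z, hz2, ?_⟩
    rw [slope_def_field, hg12, sub_zero] at hz1
    have hzlt : z - 1/2 < 0 := by have := hz2.2; linarith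
    rcases div_pos_iff.mp hz1 with ⟨h1, h2⟩ | ⟨h1, h2⟩
    · linarith
    · linarith
  -- IVT: find x₀ ∈ (0, x₁) with g x₀ = 0
  obtain ⟨x₀, hx₀mem, hgx₀⟩ : ∃ x₀ ∈ Ioo (0:ℝ) x₁, g x₀ = 0 := by
    have h0 : (0:ℝ) ∈ Ioo (g x₁) (g 0) := ⟨hgx₁, hg0⟩
    have := intermediate_value_Ioo' (le_of_lt hx₁mem.1) hgcont.continuousOn h0
    obtain ⟨x₀, hmem, heq⟩ := this
    exact ⟨x₀, hmem, heq⟩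
  have hx₀half : x₀ ∈ Ioo (0:ℝ) (1/2) := ⟨hx₀mem.1, lt_trans hx₀mem.2 hx₁mem.2⟩
  -- positivity of u, v on (0,1/2)
  have hvpos : ∀ x ∈ Ioo (0:ℝ) (1/2), ∀ c : ℝ, 0 < c → (0:ℝ) < (1-x) ^ c - x ^ c := by
    intro x hx c hc
    have h1 : x < 1 - x := by have := hx.2; linarith
    have := Real.rpow_lt_rpow (le_of_lt hx.1) h1 hc
    linarith
  have hratio := ratio_anti (q-1) (p-1) hq1 (by linarith) (by linarith)
  -- sign of g on both sides of x₀
  have hgsign : ∀ x ∈ Ioo (0:ℝ) (1/2), (x < x₀ → 0 < g x) ∧ (x₀ < x → g x < 0) := by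
    intro x hx
    have hux := hvpos x hx (q-1) hq1
    have hvx := hvpos x hx (p-1) hp1
    have hux₀ := hvpos x₀ hx₀half (q-1) hq1
    have hvx₀ := hvpos x₀ hx₀half (p-1) hp1
    have heq : q * ((1-x₀) ^ (q-1) - x₀ ^ (q-1)) = lam * p * ((1-x₀) ^ (p-1) - x₀ ^ (p-1)) := by
      simp only [hgdef] at hgx₀; linarith
    constructor
    · intro hlt
      have hr := hratio hx hx₀half hlt
      simp only at hr
      rw [div_lt_div_iff₀ hvx₀ hvx] at hr
      simp only [hgdef]
      set U := ((1:ℝ)-x) ^ (q-1) - x ^ (q-1) with hU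
      set V := ((1:ℝ)-x) ^ (p-1) - x ^ (p-1) with hV
      set U0 := ((1:ℝ)-x₀) ^ (q-1) - x₀ ^ (q-1) with hU0
      set V0 := ((1:ℝ)-x₀) ^ (p-1) - x₀ ^ (p-1) with hV0
      have h1 : (lam*p*V)*V0 < (q*U)*V0 := by
        calc (lam*p*V)*V0 = (lam*p*V0)*V := by ring
        _ = (q*U0)*V := by rw [heq]
        _ = q*(U0*V) := by ring
        _ < q*(U*V0) := mul_lt_mul_of_pos_left hr hq0
        _ = (q*U)*V0 := by ring
      have h2 := lt_of_mul_lt_mul_right h1 hvx₀.le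
      linarith
    · intro hlt
      have hr := hratio hx₀half hx hlt
      simp only at hr
      rw [div_lt_div_iff₀ hvx hvx₀] at hr
      simp only [hgdef]
      set U := ((1:ℝ)-x) ^ (q-1) - x ^ (q-1) with hU
      set V := ((1:ℝ)-x) ^ (p-1) - x ^ (p-1) with hV
      set U0 := ((1:ℝ)-x₀) ^ (q-1) - x₀ ^ (q-1) with hU0
      set V0 := ((1:ℝ)-x₀) ^ (p-1) - x₀ ^ (p-1) with hV0
      have h1 : (q*U)*V0 < (lam*p*V)*V0 := by
        calc (q*U)*V0 = q*(U*V0) := by ring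
        _ < q*(U0*V) := mul_lt_mul_of_pos_left hr hq0
        _ = (q*U0)*V := by ring
        _ = (lam*p*V0)*V := by rw [heq]
        _ = (lam*p*V)*V0 := by ring
      have h2 := lt_of_mul_lt_mul_right h1 hvx₀.le
      linarith
  -- f strictly decreasing on [0, x₀]
  have hanti : StrictAntiOn f (Icc 0 x₀) := by
    apply strictAntiOn_of_deriv_neg (convex_Icc 0 x₀)
      (fun x _ => (hfd x).continuousAt.continuousWithinAt)
    intro x hx
    rw [interior_Icc] at hx
    have hx' : x ∈ Ioo (0:ℝ) (1/2) := ⟨hx.1, lt_trans hx.2 hx₀half.2⟩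
    rw [(hfd x).deriv]
    have := (hgsign x hx').1 hx.2
    linarith
  -- f strictly increasing on [x₀, 1/2]
  have hmono : StrictMonoOn f (Icc x₀ (1/2)) := by
    apply strictMonoOn_of_deriv_pos (convex_Icc x₀ (1/2))
      (fun x _ => (hfd x).continuousAt.continuousWithinAt)
    intro x hx
    rw [interior_Icc] at hx
    have hx' : x ∈ Ioo (0:ℝ) (1/2) := ⟨lt_trans hx₀half.1 hx.1, hx.2⟩
    rw [(hfd x).deriv]
    have := (hgsign x hx').2 hx.1
    linarith
  refine ⟨x₀, hx₀half, ?_⟩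
  intro x hx hne
  rcases lt_or_gt_of_ne hne with hlt | hgt
  · exact hanti ⟨hx.1, hlt.le⟩ ⟨hx₀half.1.le, le_refl _⟩ hlt
  · exact hmono ⟨le_refl _, hx₀half.2.le⟩ ⟨hgt.le, hx.2⟩ hgt
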